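/- Let X be a proper metric space. Then the space SX of geodesics of X, with distance d(v,w) = sup_{t∈ℝ} e^{−|t|}·d(v(t), w(t)), is a proper metric space, and the footpoint projection π : SX → X, π(v) = v(0), is 1-Lipschitz and proper (preimages of compact sets are compact). -/

import Mathlib

/-- The space of (unit-speed, bi-infinite) geodesics of `X`: isometric embeddings `ℝ → X`. -/
def GeodSpace (X : Type*) [MetricSpace X] : Type _ := {v : ℝ → X // Isometry v}

namespace Stmt7Aux

open Filter Topology

variable {X : Type*} [MetricSpace X]

lemma geod_dist (v : GeodSpace X) (s t : ℝ) : dist (v.1 s) (v.1 t) = |s - t| := by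
  rw [v.2.dist_eq, Real.dist_eq]

noncomputable def gdist (v w : GeodSpace X) : ℝ :=
  ⨆ t : ℝ, Real.exp (-|t|) * dist (v.1 t) (w.1 t)

lemma abs_mul_exp_le (t : ℝ) : |t| * Real.exp (-|t|) ≤ 1 := by
  rw [Real.exp_neg, mul_inv_le_iff₀ (Real.exp_pos _), one_mul]
  have := Real.add_one_le_exp |t|
  linarith

lemma term_le (v w : GeodSpace X) (t : ℝ) :
    Real.exp (-|t|) * dist (v.1 t) (w.1 t) ≤ dist (v.1 0) (w.1 0) + 2 := by
  have h1 : dist (v.1 t) (w.1 t) ≤ dist (v.1 0) (w.1 0) + 2 * |t| := by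
    calc dist (v.1 t) (w.1 t)
        ≤ dist (v.1 t) (v.1 0) + dist (v.1 0) (w.1 0) + dist (w.1 0) (w.1 t) :=
          dist_triangle4 _ _ _ _
      _ = |t| + dist (v.1 0) (w.1 0) + |t| := by
          rw [geod_dist, geod_dist]; simp [abs_sub_comm]
      _ = dist (v.1 0) (w.1 0) + 2 * |t| := by ring
  have he1 : Real.exp (-|t|) ≤ 1 := Real.exp_le_one_iff.2 (neg_nonpos.2 (abs_nonneg t))
  have h2 := abs_mul_exp_le t
  have hepos := (Real.exp_pos (-|t|)).le
  calc Real.exp (-|t|) * dist (v.1 t) (w.1 t)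
      ≤ Real.exp (-|t|) * (dist (v.1 0) (w.1 0) + 2 * |t|) := by
        exact mul_le_mul_of_nonneg_left h1 hepos
    _ = Real.exp (-|t|) * dist (v.1 0) (w.1 0) + 2 * (|t| * Real.exp (-|t|)) := by ring
    _ ≤ 1 * dist (v.1 0) (w.1 0) + 2 * 1 := by
        gcongr
    _ = dist (v.1 0) (w.1 0) + 2 := by ring

lemma bdd (v w : GeodSpace X) :
    BddAbove (Set.range fun t : ℝ => Real.exp (-|t|) * dist (v.1 t) (w.1 t)) := by
  refine ⟨dist (v.1 0) (w.1 0) + 2, ?_⟩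
  rintro x ⟨t, rfl⟩
  exact term_le v w t

lemma term_le_gdist (v w : GeodSpace X) (t : ℝ) :
    Real.exp (-|t|) * dist (v.1 t) (w.1 t) ≤ gdist v w :=
  le_ciSup (bdd v w) t

lemma dist0_le_gdist (v w : GeodSpace X) : dist (v.1 0) (w.1 0) ≤ gdist v w := by
  have := term_le_gdist v w 0
  simpa using this

lemma gdist_triangle (v u w : GeodSpace X) : gdist v w ≤ gdist v u + gdist u w := by
  apply ciSup_le
  intro t
  calc Real.exp (-|t|) * dist (v.1 t) (w.1 t)
      ≤ Real.exp (-|t|) * (dist (v.1 t) (u.1 t) + dist (u.1 t) (w.1 t)) :=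
        mul_le_mul_of_nonneg_left (dist_triangle _ _ _) (Real.exp_pos _).le
    _ = Real.exp (-|t|) * dist (v.1 t) (u.1 t) + Real.exp (-|t|) * dist (u.1 t) (w.1 t) := by ring
    _ ≤ gdist v u + gdist u w := add_le_add (term_le_gdist v u t) (term_le_gdist u w t)

lemma gdist_eq_zero {v w : GeodSpace X} (h : gdist v w = 0) : v = w := by
  apply Subtype.ext
  funext t
  have h1 := term_le_gdist v w t
  rw [h] at h1
  have h2 : dist (v.1 t) (w.1 t) ≤ 0 := by
    by_contra hc
    push_neg at hc
    nlinarith [Real.exp_pos (-|t|)]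
  exact dist_le_zero.1 h2

noncomputable instance m : MetricSpace (GeodSpace X) where
  dist := gdist
  dist_self v := by simp [gdist]
  dist_comm v w := by simp [gdist, dist_comm]
  dist_triangle v u w := gdist_triangle v u w
  eq_of_dist_eq_zero h := gdist_eq_zero h

lemma dist_eq (v w : GeodSpace X) : dist v w = gdist v w := rfl

lemma tail_bound {r T x : ℝ} (hr : 0 ≤ r) (hT : 0 ≤ T) (hx : T ≤ x) :
    Real.exp (-x) * (2 * x + 2 * r) ≤ Real.exp (-(T / 2)) * (4 + 2 * r) := by
  have hx0 : 0 ≤ x := hT.trans hx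
  have h1 : Real.exp (-x) = Real.exp (-(x / 2)) * Real.exp (-(x / 2)) := by
    rw [← Real.exp_add]; ring_nf
  have h2 : x * Real.exp (-(x / 2)) ≤ 2 := by
    rw [Real.exp_neg, mul_inv_le_iff₀ (Real.exp_pos _)]
    have := Real.add_one_le_exp (x / 2)
    nlinarith [Real.exp_pos (x / 2)]
  have h3 : Real.exp (-(x / 2)) ≤ Real.exp (-(T / 2)) := Real.exp_le_exp.2 (by linarith)
  have h4 : Real.exp (-(x / 2)) ≤ 1 := Real.exp_le_one_iff.2 (by linarith)
  have hA := (Real.exp_pos (-(x / 2))).le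
  calc Real.exp (-x) * (2 * x + 2 * r)
      = (x * Real.exp (-(x / 2))) * (2 * Real.exp (-(x / 2)))
        + (Real.exp (-(x / 2)) * Real.exp (-(x / 2))) * (2 * r) := by rw [h1]; ring
    _ ≤ 2 * (2 * Real.exp (-(x / 2))) + (Real.exp (-(x / 2)) * 1) * (2 * r) := by
        gcongr
    _ = Real.exp (-(x / 2)) * (4 + 2 * r) := by ring
    _ ≤ Real.exp (-(T / 2)) * (4 + 2 * r) := by
        apply mul_le_mul_of_nonneg_right h3
        linarith

variable [ProperSpace X]

lemma compact_ball (v₀ : GeodSpace X) (r : ℝ) :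
    IsCompact (Metric.closedBall v₀ r) := by
  rw [isCompact_iff_ultrafilter_le_nhds]
  intro F hF
  have hmem : Metric.closedBall v₀ r ∈ F := le_principal_iff.1 hF
  obtain ⟨v₁, hv₁⟩ := F.nonempty_of_mem hmem
  rw [Metric.mem_closedBall] at hv₁
  have hr : 0 ≤ r := dist_nonneg.trans hv₁
  -- pointwise limits
  have hpt : ∀ t : ℝ, ∃ x ∈ Metric.closedBall (v₀.1 t) (Real.exp |t| * r),
      Tendsto (fun v : GeodSpace X => v.1 t) F (𝓝 x) := by
    intro t
    have hK : IsCompact (Metric.closedBall (v₀.1 t) (Real.exp |t| * r)) :=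
      isCompact_closedBall _ _
    have hle : ↑(F.map (fun v : GeodSpace X => v.1 t)) ≤
        Filter.principal (Metric.closedBall (v₀.1 t) (Real.exp |t| * r)) := by
      rw [Ultrafilter.coe_map, le_principal_iff, mem_map]
      filter_upwards [hmem] with v hv
      rw [Metric.mem_closedBall] at hv
      simp only [Set.mem_preimage, Metric.mem_closedBall]
      have h1 : (Real.exp |t|)⁻¹ * dist (v.1 t) (v₀.1 t) ≤ r := by
        have := (term_le_gdist v v₀ t).trans hv
        rwa [Real.exp_neg] at this
      calc dist (v.1 t) (v₀.1 t)
          = Real.exp |t| * ((Real.exp |t|)⁻¹ * dist (v.1 t) (v₀.1 t)) := by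
            field_simp
        _ ≤ Real.exp |t| * r := mul_le_mul_of_nonneg_left h1 (Real.exp_pos _).le
    obtain ⟨x, hx1, hx2⟩ := hK.ultrafilter_le_nhds _ hle
    exact ⟨x, hx1, hx2⟩
  choose f hf1 hf2 using hpt
  have hiso : Isometry f := by
    apply Isometry.of_dist_eq
    intro s t
    have h1 : Tendsto (fun v : GeodSpace X => dist (v.1 s) (v.1 t)) F
        (𝓝 (dist (f s) (f t))) := (hf2 s).dist (hf2 t)
    have h2 : (fun v : GeodSpace X => dist (v.1 s) (v.1 t)) = fun _ => dist s t := by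
      funext v; rw [geod_dist, Real.dist_eq]
    rw [h2] at h1
    exact tendsto_nhds_unique h1 tendsto_const_nhds
  set g : GeodSpace X := ⟨f, hiso⟩ with hg
  have hgd : ∀ t, gdist g v₀ ≥ Real.exp (-|t|) * dist (f t) (v₀.1 t) := fun t =>
    term_le_gdist g v₀ t
  have hgmem : g ∈ Metric.closedBall v₀ r := by
    rw [Metric.mem_closedBall]
    show gdist g v₀ ≤ r
    apply ciSup_le
    intro t
    have hten : Tendsto (fun v : GeodSpace X => Real.exp (-|t|) * dist (v.1 t) (v₀.1 t)) F
        (𝓝 (Real.exp (-|t|) * dist (f t) (v₀.1 t))) :=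
      tendsto_const_nhds.mul ((hf2 t).dist tendsto_const_nhds)
    refine le_of_tendsto hten ?_
    filter_upwards [hmem] with v hv
    exact (term_le_gdist v v₀ t).trans hv
  refine ⟨g, hgmem, ?_⟩
  have hconv : Tendsto (fun v : GeodSpace X => v) F (𝓝 g) := by
    rw [Metric.tendsto_nhds]
    intro ε hε
    -- choose tail cutoff T
    obtain ⟨T, hT0, hT⟩ : ∃ T : ℝ, 0 ≤ T ∧ Real.exp (-(T / 2)) * (4 + 2 * r) < ε / 2 := by
      have h5 : Tendsto (fun T : ℝ => -(T / 2)) atTop atBot := by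
        apply Filter.tendsto_neg_atBot_iff.2
        exact Tendsto.atTop_div_const (by norm_num) tendsto_id
      have h4 : Tendsto (fun T : ℝ => Real.exp (-(T / 2)) * (4 + 2 * r)) atTop (𝓝 0) := by
        have := (Real.tendsto_exp_atBot.comp h5).mul_const (4 + 2 * r)
        simpa using this
      have h6 := h4.eventually (gt_mem_nhds (by positivity : (0 : ℝ) < ε / 2))
      obtain ⟨T, hT⟩ := (h6.and (eventually_ge_atTop 0)).exists
      exact ⟨T, hT.2, hT.1⟩
    set δ : ℝ := ε / 8 with hδ
    have hδpos : 0 < δ := by positivity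
    set N : ℕ := ⌈2 * T / δ⌉₊ with hN
    have hev : ∀ᶠ v : GeodSpace X in F, ∀ i ∈ Finset.range (N + 1),
        dist (v.1 (-T + i * δ)) (f (-T + i * δ)) < ε / 4 := by
      rw [Filter.eventually_all_finset]
      intro i _
      exact Metric.tendsto_nhds.1 (hf2 _) (ε / 4) (by positivity)
    filter_upwards [hmem, hev] with v hv hvev
    rw [Metric.mem_closedBall] at hv
    show dist v g < ε
    have hb : gdist v g ≤ ε / 2 := by
      apply ciSup_le
      intro t
      show Real.exp (-|t|) * dist (v.1 t) (f t) ≤ ε / 2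
      rcases le_or_gt |t| T with hcase | hcase
      · -- compact part : grid approximation
        set i : ℕ := ⌊(t + T) / δ⌋₊ with hi
        have htT : 0 ≤ t + T := by
          have := neg_abs_le t
          linarith
        have hile : (i : ℝ) * δ ≤ t + T := by
          rw [← le_div_iff₀ hδpos]
          exact Nat.floor_le (by positivity)
        have hlt : t + T < ((i : ℝ) + 1) * δ := by
          have h := Nat.lt_floor_add_one ((t + T) / δ)
          rw [div_lt_iff₀ hδpos] at h
          exact_mod_cast h
        set s : ℝ := -T + i * δ with hsdef
        have hs1 : s ≤ t := by simp only [hsdef]; linarith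
        have hs2 : t - s < δ := by simp only [hsdef]; linarith
        have hiN : i ∈ Finset.range (N + 1) := by
          rw [Finset.mem_range, Nat.lt_succ_iff]
          have h7 : (t + T) / δ ≤ 2 * T / δ := by
            gcongr
            linarith [le_abs_self t]
          calc i = ⌊(t + T) / δ⌋₊ := rfl
            _ ≤ ⌊2 * T / δ⌋₊ := Nat.floor_le_floor h7
            _ ≤ ⌈2 * T / δ⌉₊ := Nat.floor_le_ceil _
        have hvf := hvev i hiN
        have h8 : dist (v.1 t) (v.1 s) = |t - s| := geod_dist v t s
        have h9 : dist (f s) (f t) = |s - t| := by rw [hiso.dist_eq, Real.dist_eq]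
        have habs : |t - s| ≤ δ := by
          rw [abs_of_nonneg (by linarith)]
          linarith
        have habs2 : |s - t| ≤ δ := by rw [abs_sub_comm]; exact habs
        have hd : dist (v.1 t) (f t) ≤ |t - s| + dist (v.1 s) (f s) + |s - t| := by
          calc dist (v.1 t) (f t)
              ≤ dist (v.1 t) (v.1 s) + dist (v.1 s) (f s) + dist (f s) (f t) :=
                dist_triangle4 _ _ _ _
            _ = |t - s| + dist (v.1 s) (f s) + |s - t| := by rw [h8, h9]
        have he1 : Real.exp (-|t|) ≤ 1 := Real.exp_le_one_iff.2 (neg_nonpos.2 (abs_nonneg t))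
        calc Real.exp (-|t|) * dist (v.1 t) (f t)
            ≤ 1 * dist (v.1 t) (f t) := mul_le_mul_of_nonneg_right he1 dist_nonneg
          _ = dist (v.1 t) (f t) := one_mul _
          _ ≤ |t - s| + dist (v.1 s) (f s) + |s - t| := hd
          _ ≤ δ + dist (v.1 s) (f s) + δ := by linarith
          _ ≤ ε / 2 := by
              rw [hδ] at *
              linarith [hvf]
      · -- tail
        have hgv : gdist g v₀ ≤ r := by rwa [Metric.mem_closedBall] at hgmem
        have hd0 : dist (v.1 0) (f 0) ≤ 2 * r := by
          have ha : dist (v.1 0) (v₀.1 0) ≤ r := (dist0_le_gdist v v₀).trans hv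
          have hb' : dist (f 0) (v₀.1 0) ≤ r := (dist0_le_gdist g v₀).trans hgv
          calc dist (v.1 0) (f 0) ≤ dist (v.1 0) (v₀.1 0) + dist (v₀.1 0) (f 0) :=
                dist_triangle _ _ _
            _ ≤ r + r := add_le_add ha (by rwa [dist_comm])
            _ = 2 * r := by ring
        have hdt : dist (v.1 t) (f t) ≤ 2 * |t| + 2 * r := by
          have h8 : dist (v.1 t) (v.1 0) = |t| := by rw [geod_dist]; simp
          have h9 : dist (f 0) (f t) = |t| := by
            rw [hiso.dist_eq, Real.dist_eq]; simp [abs_sub_comm]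
          calc dist (v.1 t) (f t)
              ≤ dist (v.1 t) (v.1 0) + dist (v.1 0) (f 0) + dist (f 0) (f t) :=
                dist_triangle4 _ _ _ _
            _ = |t| + dist (v.1 0) (f 0) + |t| := by rw [h8, h9]
            _ ≤ 2 * |t| + 2 * r := by linarith
        calc Real.exp (-|t|) * dist (v.1 t) (f t)
            ≤ Real.exp (-|t|) * (2 * |t| + 2 * r) :=
              mul_le_mul_of_nonneg_left hdt (Real.exp_pos _).le
          _ ≤ Real.exp (-(T / 2)) * (4 + 2 * r) := tail_bound hr hT0 hcase.le
          _ ≤ ε / 2 := hT.le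
    calc dist v g = gdist v g := rfl
      _ ≤ ε / 2 := hb
      _ < ε := by linarith
  exact hconv

instance proper : ProperSpace (GeodSpace X) where
  isCompact_closedBall := compact_ball

omit [ProperSpace X] in
lemma lip : LipschitzWith 1 (fun v : GeodSpace X => v.1 0) := by
  apply LipschitzWith.of_dist_le_mul
  intro v w
  rw [NNReal.coe_one, one_mul]
  exact dist0_le_gdist v w

lemma preimage_compact (K : Set X) (hK : IsCompact K) :
    IsCompact ((fun v : GeodSpace X => v.1 0) ⁻¹' K) := by
  rcases Set.eq_empty_or_nonempty ((fun v : GeodSpace X => v.1 0) ⁻¹' K) with h | ⟨v₁, hv₁⟩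
  · rw [h]; exact isCompact_empty
  · obtain ⟨R, hR⟩ := (hK.isBounded).subset_closedBall (v₁.1 0)
    have hclosed : IsClosed ((fun v : GeodSpace X => v.1 0) ⁻¹' K) :=
      hK.isClosed.preimage lip.continuous
    apply (compact_ball v₁ (R + 2)).of_isClosed_subset hclosed
    intro v hv
    rw [Metric.mem_closedBall, dist_comm]
    show gdist v₁ v ≤ R + 2
    apply ciSup_le
    intro t
    have h1 := term_le v₁ v t
    have h2 : dist (v₁.1 0) (v.1 0) ≤ R := by
      rw [dist_comm]
      exact Metric.mem_closedBall.1 (hR hv)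
    linarith
end Stmt7Aux

theorem stmt7 {X : Type*} [MetricSpace X] [ProperSpace X] :
    ∃ m : MetricSpace (GeodSpace X),
      (∀ v w : GeodSpace X,
        @dist _ m.toPseudoMetricSpace.toDist v w
          = ⨆ t : ℝ, Real.exp (-|t|) * dist (v.1 t) (w.1 t)) ∧
      @ProperSpace (GeodSpace X) m.toPseudoMetricSpace ∧
      @LipschitzWith (GeodSpace X) X m.toPseudoMetricSpace.toPseudoEMetricSpace _ 1
        (fun v : GeodSpace X => v.1 0) ∧
      (∀ K : Set X, IsCompact K →
        @IsCompact (GeodSpace X) m.toUniformSpace.toTopologicalSpace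
          ((fun v : GeodSpace X => v.1 0) ⁻¹' K)) := by
  exact ⟨Stmt7Aux.m, fun v w => rfl, Stmt7Aux.proper, Stmt7Aux.lip, Stmt7Aux.preimage_compact⟩
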